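/- Let X, Y, Z be three independent random variables, A an event determined by (X,Y), and A' an event determined by (Y,Z). Let X₁, Y₁, Y₂, Z₁ be independent samples of X, Y, Y, Z respectively. Then the probability that [A holds on (X₁,Y₁) and A' holds on (Y₂,Z₁)] and [A fails on (X₁,Y₂) or A' fails on (Y₁,Z₁)] is at most P(A)·P(A') − P(A ∩ A')². -/

import Mathlib

open MeasureTheory ENNReal

lemma sq_lintegral_le_lintegral_sq {δ : Type*} [MeasurableSpace δ] (m : Measure δ)
    [IsProbabilityMeasure m] {g : δ → ℝ≥0∞} (hg : AEMeasurable g m) :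
    (∫⁻ a, g a ∂m) ^ 2 ≤ ∫⁻ a, g a ^ 2 ∂m := by
  have hpq : Real.HolderConjugate 2 2 := ⟨by norm_num, by norm_num, by norm_num⟩
  have h := ENNReal.lintegral_mul_le_Lp_mul_Lq m hpq hg
    (aemeasurable_const (b := (1 : ℝ≥0∞)))
  simp only [Pi.mul_apply, mul_one, ENNReal.one_rpow, lintegral_const, measure_univ,
    one_mul] at h
  have h2 : ∀ x : ℝ≥0∞, x ^ (2 : ℝ) = x ^ 2 := by
    intro x
    rw [show (2 : ℝ) = ((2 : ℕ) : ℝ) by norm_num, ENNReal.rpow_natCast]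
  simp only [h2] at h
  calc (∫⁻ a, g a ∂m) ^ 2 ≤ ((∫⁻ a, g a ^ 2 ∂m) ^ (1/2 : ℝ)) ^ 2 := pow_le_pow_left' h 2
    _ = ∫⁻ a, g a ^ 2 ∂m := by
        rw [← h2, ← ENNReal.rpow_mul]; norm_num

lemma inner_calc {β γ : Type*} [MeasurableSpace β] [MeasurableSpace γ]
    (ν : Measure β) (ρ : Measure γ) [SFinite ν] [SFinite ρ]
    {u : β → γ → ℝ≥0∞} (hu : Measurable fun p : β × γ => u p.1 p.2) :
    ∫⁻ y₁, ∫⁻ y₂, ∫⁻ z, u y₁ z * u y₂ z ∂ρ ∂ν ∂ν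
      = ∫⁻ z, (∫⁻ y, u y z ∂ν) ^ 2 ∂ρ := by
  set K : γ → ℝ≥0∞ := fun z => ∫⁻ y, u y z ∂ν with hK
  have mK : Measurable K := Measurable.lintegral_prod_right' (hu.comp measurable_swap)
  calc ∫⁻ y₁, ∫⁻ y₂, ∫⁻ z, u y₁ z * u y₂ z ∂ρ ∂ν ∂ν
      = ∫⁻ y₁, ∫⁻ z, u y₁ z * K z ∂ρ ∂ν := by
        refine lintegral_congr fun y₁ => ?_
        rw [lintegral_lintegral_swap
          (((hu.comp (measurable_const.prodMk measurable_snd)).mul hu).aemeasurable)]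
        refine lintegral_congr fun z => ?_
        exact lintegral_const_mul _ (hu.comp (measurable_id.prodMk measurable_const))
    _ = ∫⁻ z, (∫⁻ y₁, u y₁ z ∂ν) * K z ∂ρ := by
        rw [lintegral_lintegral_swap ((hu.mul (mK.comp measurable_snd)).aemeasurable)]
        refine lintegral_congr fun z => ?_
        exact lintegral_mul_const _ (hu.comp (measurable_id.prodMk measurable_const))
    _ = ∫⁻ z, K z ^ 2 ∂ρ := by
        refine lintegral_congr fun z => ?_
        rw [sq]

theorem stmt0 {α β γ : Type*} [MeasurableSpace α] [MeasurableSpace β] [MeasurableSpace γ]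
    (μ : Measure α) (ν : Measure β) (ρ : Measure γ)
    [IsProbabilityMeasure μ] [IsProbabilityMeasure ν] [IsProbabilityMeasure ρ]
    (A : Set (α × β)) (A' : Set (β × γ))
    (hA : MeasurableSet A) (hA' : MeasurableSet A') :
    ((μ.prod (ν.prod (ν.prod ρ)))
      {p : α × β × β × γ |
        ((p.1, p.2.1) ∈ A ∧ (p.2.2.1, p.2.2.2) ∈ A') ∧
        ((p.1, p.2.2.1) ∉ A ∨ (p.2.1, p.2.2.2) ∉ A')}).toReal ≤
    ((μ.prod ν) A).toReal * ((ν.prod ρ) A').toReal -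
      (((μ.prod (ν.prod ρ))
        {q : α × β × γ | (q.1, q.2.1) ∈ A ∧ (q.2.1, q.2.2) ∈ A'}).toReal) ^ 2 := by
  have mA1 : Measurable (A.indicator (1 : α × β → ℝ≥0∞)) := measurable_one.indicator hA
  have mA'1 : Measurable (A'.indicator (1 : β × γ → ℝ≥0∞)) := measurable_one.indicator hA'
  set f : α → β → ℝ≥0∞ := fun x y => A.indicator 1 (x, y) with hf
  set h : β → γ → ℝ≥0∞ := fun y z => A'.indicator 1 (y, z) with hh
  set G : α → γ → ℝ≥0∞ := fun x z => ∫⁻ y, f x y * h y z ∂ν with hGdef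
  have mu2 : ∀ x : α, Measurable fun p : β × γ => f x p.1 * h p.1 p.2 := fun x =>
    (mA1.comp (measurable_const.prodMk measurable_fst)).mul
      (mA'1.comp (measurable_fst.prodMk measurable_snd))
  have mG : Measurable fun q : α × γ => G q.1 q.2 :=
    Measurable.lintegral_prod_right'
      (f := fun p : (α × γ) × β => f p.1.1 p.2 * h p.2 p.1.2)
      ((mA1.comp (measurable_fst.fst.prodMk measurable_snd)).mul
        (mA'1.comp (measurable_snd.prodMk measurable_fst.snd)))
  set E : Set (α × β × β × γ) :=
    {p | (p.1, p.2.1) ∈ A ∧ (p.2.2.1, p.2.2.2) ∈ A'} with hE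
  set Fs : Set (α × β × β × γ) :=
    {p | (p.1, p.2.2.1) ∈ A ∧ (p.2.1, p.2.2.2) ∈ A'} with hFs
  have mE : MeasurableSet E :=
    (hA.preimage (measurable_fst.prodMk measurable_snd.fst)).inter
      (hA'.preimage (measurable_snd.snd.fst.prodMk measurable_snd.snd.snd))
  have mFs : MeasurableSet Fs :=
    (hA.preimage (measurable_fst.prodMk measurable_snd.snd.fst)).inter
      (hA'.preimage (measurable_snd.fst.prodMk measurable_snd.snd.snd))
  have mEF : MeasurableSet (E ∩ Fs) := mE.inter mFs
  set S3 : Set (α × β × γ) := {q | (q.1, q.2.1) ∈ A ∧ (q.2.1, q.2.2) ∈ A'} with hS3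
  have mS3 : MeasurableSet S3 :=
    (hA.preimage (measurable_fst.prodMk measurable_snd.fst)).inter
      (hA'.preimage (measurable_snd.fst.prodMk measurable_snd.snd))
  -- value of E
  have hE_val : (μ.prod (ν.prod (ν.prod ρ))) E = (μ.prod ν) A * (ν.prod ρ) A' := by
    rw [Measure.prod_apply mE]
    have hslice : ∀ x, Prod.mk x ⁻¹' E = (Prod.mk x ⁻¹' A) ×ˢ A' := by
      intro x; ext ⟨y₁, y₂, z⟩; simp [hE, Set.mem_prod]
    simp_rw [hslice, Measure.prod_prod]
    rw [lintegral_mul_const _ (measurable_measure_prodMk_left hA), ← Measure.prod_apply hA]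
  -- value of E ∩ Fs
  have hEF_val : (μ.prod (ν.prod (ν.prod ρ))) (E ∩ Fs)
      = ∫⁻ q, G q.1 q.2 ^ 2 ∂(μ.prod ρ) := by
    have indE : ∀ (x : α) (y₁ y₂ : β) (z : γ),
        (E ∩ Fs).indicator (1 : (α × β × β × γ) → ℝ≥0∞) (x, (y₁, (y₂, z)))
          = (f x y₁ * h y₁ z) * (f x y₂ * h y₂ z) := by
      intro x y₁ y₂ z
      by_cases h1 : (x, y₁) ∈ A <;> by_cases h2 : (x, y₂) ∈ A <;>
        by_cases h3 : (y₁, z) ∈ A' <;> by_cases h4 : (y₂, z) ∈ A' <;>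
        simp [hE, hFs, Set.indicator_apply, hf, hh, h1, h2, h3, h4]
    rw [← lintegral_indicator_one mEF,
      lintegral_prod _ ((measurable_one.indicator mEF).aemeasurable)]
    have step : ∀ x : α,
        (∫⁻ w, (E ∩ Fs).indicator 1 (x, w) ∂(ν.prod (ν.prod ρ)))
          = ∫⁻ z, G x z ^ 2 ∂ρ := by
      intro x
      have m1 : Measurable fun w : β × β × γ => (E ∩ Fs).indicator (1 : (α × β × β × γ) → ℝ≥0∞) (x, w) :=
        (measurable_one.indicator mEF).comp measurable_prodMk_left
      rw [lintegral_prod _ m1.aemeasurable]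
      have step2 : ∀ y₁ : β,
          (∫⁻ v, (E ∩ Fs).indicator 1 (x, (y₁, v)) ∂(ν.prod ρ))
            = ∫⁻ y₂, ∫⁻ z, (f x y₁ * h y₁ z) * (f x y₂ * h y₂ z) ∂ρ ∂ν := by
        intro y₁
        have m2 : Measurable fun v : β × γ => (E ∩ Fs).indicator (1 : (α × β × β × γ) → ℝ≥0∞) (x, (y₁, v)) :=
          (measurable_one.indicator mEF).comp
            (measurable_const.prodMk measurable_prodMk_left)
        rw [lintegral_prod _ m2.aemeasurable]
        exact lintegral_congr fun y₂ => lintegral_congr fun z => indE x y₁ y₂ z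
      simp_rw [step2]
      exact inner_calc ν ρ (u := fun y z => f x y * h y z) (mu2 x)
    simp_rw [step]
    exact (lintegral_prod _ ((mG.pow_const 2).aemeasurable)).symm
  -- value of S3
  have hS3_val : (μ.prod (ν.prod ρ)) S3 = ∫⁻ q, G q.1 q.2 ∂(μ.prod ρ) := by
    have indS : ∀ (x : α) (y : β) (z : γ),
        S3.indicator (1 : (α × β × γ) → ℝ≥0∞) (x, (y, z)) = f x y * h y z := by
      intro x y z
      by_cases h1 : (x, y) ∈ A <;> by_cases h2 : (y, z) ∈ A' <;>
        simp [hS3, Set.indicator_apply, hf, hh, h1, h2]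
    rw [← lintegral_indicator_one mS3,
      lintegral_prod _ ((measurable_one.indicator mS3).aemeasurable)]
    have step : ∀ x : α,
        (∫⁻ v, S3.indicator 1 (x, v) ∂(ν.prod ρ)) = ∫⁻ z, G x z ∂ρ := by
      intro x
      have m1 : Measurable fun v : β × γ => S3.indicator (1 : (α × β × γ) → ℝ≥0∞) (x, v) :=
        (measurable_one.indicator mS3).comp measurable_prodMk_left
      rw [lintegral_prod _ m1.aemeasurable]
      have : (∫⁻ y, ∫⁻ z, S3.indicator 1 (x, (y, z)) ∂ρ ∂ν)
          = ∫⁻ y, ∫⁻ z, f x y * h y z ∂ρ ∂ν :=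
        lintegral_congr fun y => lintegral_congr fun z => indS x y z
      rw [this, lintegral_lintegral_swap ((mu2 x).aemeasurable)]
    simp_rw [step]
    exact (lintegral_prod _ mG.aemeasurable).symm
  -- the target set is E \ Fs
  have hTeq : {p : α × β × β × γ |
        ((p.1, p.2.1) ∈ A ∧ (p.2.2.1, p.2.2.2) ∈ A') ∧
        ((p.1, p.2.2.1) ∉ A ∨ (p.2.1, p.2.2.2) ∉ A')} = E \ Fs := by
    ext p
    simp only [hE, hFs, Set.mem_setOf_eq, Set.mem_diff]
    tauto
  rw [hTeq]
  have hdiff : (μ.prod (ν.prod (ν.prod ρ))) (E \ Fs)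
      = (μ.prod (ν.prod (ν.prod ρ))) E - (μ.prod (ν.prod (ν.prod ρ))) (E ∩ Fs) := by
    rw [← Set.diff_self_inter]
    exact measure_diff Set.inter_subset_left mEF.nullMeasurableSet (measure_ne_top _ _)
  have hle : (μ.prod (ν.prod (ν.prod ρ))) (E ∩ Fs) ≤ (μ.prod (ν.prod (ν.prod ρ))) E :=
    measure_mono Set.inter_subset_left
  have key : ((μ.prod (ν.prod ρ)) S3) ^ 2 ≤ (μ.prod (ν.prod (ν.prod ρ))) (E ∩ Fs) := by
    rw [hS3_val, hEF_val]
    exact sq_lintegral_le_lintegral_sq (μ.prod ρ) mG.aemeasurable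
  have key' : (((μ.prod (ν.prod ρ)) S3).toReal) ^ 2
      ≤ ((μ.prod (ν.prod (ν.prod ρ))) (E ∩ Fs)).toReal := by
    rw [← ENNReal.toReal_pow]
    exact ENNReal.toReal_mono (measure_ne_top _ _) key
  rw [hdiff, ENNReal.toReal_sub_of_le hle (measure_ne_top _ _), hE_val, ENNReal.toReal_mul]
  linarith
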